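/- arXiv:2602.20863 — 6 statements merged into one kernel-verified Lean document; each statement's English description precedes it below -/
import Mathlib

section
/- Let X be a real Banach space and f : X → ℝ a C² function; write df for its Fréchet derivative and d²f(y)[ξ,η] := (D(Df)(y)ξ)η for its second derivative. Let x̄ ∈ X satisfy df(x̄) = 0. Let P⁻, P⁺ : X → X be continuous linear projections with P⁻ + P⁺ = id and P⁻ ∘ P⁺ = 0, let N be a continuous seminorm on X with N(x) > 0 for every x ≠ 0, and suppose there exist r > 0 and c > 0 such that for every y ∈ X with ‖y − x̄‖ < r one has d²f(y)[ξ,ξ] ≥ c·N(ξ)² for all ξ in the range of P⁺ and d²f(y)[ξ,ξ] ≤ −c·N(ξ)² for all ξ in the range of P⁻. Then for every x ∈ X with 0 < ‖x‖ < r one has df(x̄ + x)[P⁻x − P⁺x] ≤ −c·(N(P⁻x)² + N(P⁺x)²) < 0; in particular, x̄ is the only critical point of f in the open ball of radius r centered at x̄. -/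
/-- If the second differential of a `C²` functional `f` is uniformly positive
(resp. negative) definite, with respect to a (possibly weaker) continuous seminorm `N`,
on the range of `P⁺` (resp. `P⁻`) at every point of the ball of radius `r` around the
critical point `xc`, then `df(xc + x)[P⁻x − P⁺x] ≤ −c(N(P⁻x)² + N(P⁺x)²) < 0` for all
`0 < ‖x‖ < r`; in particular `xc` is the unique critical point of `f` in that ball. -/
theorem stmt0 {X : Type*} [NormedAddCommGroup X] [NormedSpace ℝ X] [CompleteSpace X]
    (f : X → ℝ) (hf : ContDiff ℝ 2 f)
    (xc : X) (hcrit : fderiv ℝ f xc = 0)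
    (Pm Pp : X →L[ℝ] X)
    (hsum : ∀ x : X, Pm x + Pp x = x)
    (hcomp : ∀ x : X, Pm (Pp x) = 0)
    (N : Seminorm ℝ X) (hNcont : Continuous N) (hNpos : ∀ x : X, x ≠ 0 → 0 < N x)
    (r c : ℝ) (hr : 0 < r) (hc : 0 < c)
    (hplus : ∀ y : X, ‖y - xc‖ < r → ∀ ξ ∈ Set.range Pp,
      c * (N ξ) ^ 2 ≤ fderiv ℝ (fderiv ℝ f) y ξ ξ)
    (hminus : ∀ y : X, ‖y - xc‖ < r → ∀ ξ ∈ Set.range Pm,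
      fderiv ℝ (fderiv ℝ f) y ξ ξ ≤ -(c * (N ξ) ^ 2)) :
    (∀ x : X, 0 < ‖x‖ → ‖x‖ < r →
      fderiv ℝ f (xc + x) (Pm x - Pp x) ≤ -(c * ((N (Pm x)) ^ 2 + (N (Pp x)) ^ 2)) ∧
      fderiv ℝ f (xc + x) (Pm x - Pp x) < 0) ∧
    (∀ x : X, ‖x - xc‖ < r → fderiv ℝ f x = 0 → x = xc) := by
  have hd : ContDiff ℝ 1 (fderiv ℝ f) := hf.fderiv_right (by norm_num)
  have main : ∀ x : X, 0 < ‖x‖ → ‖x‖ < r →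
      fderiv ℝ f (xc + x) (Pm x - Pp x) ≤ -(c * ((N (Pm x)) ^ 2 + (N (Pp x)) ^ 2)) ∧
      fderiv ℝ f (xc + x) (Pm x - Pp x) < 0 := by
    intro x hx0 hxr
    set a := Pm x with ha
    set b := Pp x with hb
    set v := a - b with hv
    set K := c * ((N a) ^ 2 + (N b) ^ 2) with hK
    have hxne : x ≠ 0 := by
      intro h; rw [h] at hx0; simp at hx0
    have hKpos : 0 < K := by
      have hane : a ≠ 0 ∨ b ≠ 0 := by
        by_contra h
        push_neg at h
        exact hxne (by rw [← hsum x, ← ha, ← hb, h.1, h.2, add_zero])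
      have hsq : 0 < (N a) ^ 2 + (N b) ^ 2 := by
        have h1 : 0 ≤ N a := apply_nonneg N a
        have h2 : 0 ≤ N b := apply_nonneg N b
        rcases hane with h | h
        · have := hNpos a h; positivity
        · have := hNpos b h; positivity
      exact mul_pos hc hsq
    set φ : ℝ → ℝ := fun s => fderiv ℝ f (xc + s • x) v + K * s with hφ
    have hderiv : ∀ t : ℝ, HasDerivAt φ
        (fderiv ℝ (fderiv ℝ f) (xc + t • x) x v + K) t := by
      intro t
      have h1 : HasDerivAt (fun s : ℝ => xc + s • x) x t := by
        simpa using ((hasDerivAt_id t).smul_const x).const_add xc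
      have h2 : HasFDerivAt (fderiv ℝ f) (fderiv ℝ (fderiv ℝ f) (xc + t • x)) (xc + t • x) :=
        (hd.differentiable one_ne_zero (xc + t • x)).hasFDerivAt
      have h3 : HasDerivAt (fun s : ℝ => fderiv ℝ f (xc + s • x))
          (fderiv ℝ (fderiv ℝ f) (xc + t • x) x) t := h2.comp_hasDerivAt t h1
      have h4 : HasDerivAt (fun s : ℝ => fderiv ℝ f (xc + s • x) v)
          (fderiv ℝ (fderiv ℝ f) (xc + t • x) x v) t := by
        simpa using h3.clm_apply (hasDerivAt_const t v)
      exact (h4.add ((hasDerivAt_id t).const_mul K)).congr_deriv (by ring)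
    have hderiv_le : ∀ t ∈ Set.Icc (0:ℝ) 1, deriv φ t ≤ 0 := by
      intro t ht
      rw [(hderiv t).deriv]
      set y := xc + t • x with hy
      have hyr : ‖y - xc‖ < r := by
        have heq : ‖y - xc‖ = |t| * ‖x‖ := by
          rw [hy]; simp [norm_smul]
        rw [heq]
        calc |t| * ‖x‖ ≤ 1 * ‖x‖ := by
              apply mul_le_mul_of_nonneg_right _ (norm_nonneg x)
              rw [abs_of_nonneg ht.1]; exact ht.2
          _ < r := by simpa using hxr
      set D := fderiv ℝ (fderiv ℝ f) y with hD
      have hsymm : D a b = D b a :=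
        (hf.contDiffAt.isSymmSndFDerivAt (by norm_num)) a b
      have hexp : D x v = D a a - D b b := by
        have hx' : x = a + b := (hsum x).symm
        rw [hv, hx']
        simp only [map_add, map_sub, ContinuousLinearMap.add_apply,
          ContinuousLinearMap.sub_apply]
        rw [hsymm]; ring
      have h1 : D a a ≤ -(c * (N a) ^ 2) := hminus y hyr a ⟨x, rfl⟩
      have h2 : c * (N b) ^ 2 ≤ D b b := hplus y hyr b ⟨x, rfl⟩
      rw [hexp]
      have hKeq : K = c * (N a) ^ 2 + c * (N b) ^ 2 := by rw [hK]; ring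
      linarith
    have hdiff : Differentiable ℝ φ := fun t => (hderiv t).differentiableAt
    have hanti : AntitoneOn φ (Set.Icc (0:ℝ) 1) := by
      apply antitoneOn_of_deriv_nonpos (convex_Icc 0 1)
        hdiff.continuous.continuousOn
        (hdiff.differentiableOn)
      intro t ht
      exact hderiv_le t (Set.Ioo_subset_Icc_self (by rwa [interior_Icc] at ht))
    have h01 : φ 1 ≤ φ 0 := hanti (by norm_num) (by norm_num) zero_le_one
    have hφ0 : φ 0 = 0 := by simp [hφ, hcrit]
    have hφ1 : φ 1 = fderiv ℝ f (xc + x) v + K := by simp [hφ]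
    have hle : fderiv ℝ f (xc + x) v ≤ -K := by
      rw [hφ1, hφ0] at h01; linarith
    exact ⟨hle, lt_of_le_of_lt hle (by linarith)⟩
  refine ⟨main, ?_⟩
  intro x hxr hfx
  by_contra hne
  have hu0 : 0 < ‖x - xc‖ := by
    rw [norm_pos_iff]
    exact sub_ne_zero_of_ne hne
  have := (main (x - xc) hu0 hxr).2
  rw [add_sub_cancel] at this
  rw [hfx] at this
  simp at this
end

section
/- Let H be a real Hilbert space and let V, W ⊆ H be closed subspaces, with orthogonal projections P_V and P_W onto V and W respectively. If the difference P_V − P_W is a compact operator, then both intersections V ∩ W^⊥ and W ∩ V^⊥ are finite-dimensional subspaces of H. (In particular, the relative dimension dim(W, V) := dim(W^⊥ ∩ V) − dim(W ∩ V^⊥) is a well-defined integer.) -/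
/-- If a compact operator fixes every point of a closed submodule, that submodule is
finite dimensional. -/
lemma aux_findim {H : Type*} [NormedAddCommGroup H] [InnerProductSpace ℝ H]
    (U : Submodule ℝ H) (hU : IsClosed (U : Set H)) {f : H → H}
    (hK : IsCompactOperator f) (hfix : ∀ x ∈ U, f x = x) :
    FiniteDimensional ℝ U := by
  obtain ⟨K, hKc, hKnhds⟩ := hK
  obtain ⟨ε, hε, hball⟩ := Metric.mem_nhds_iff.mp hKnhds
  have hsub : (Subtype.val '' (Metric.closedBall (0 : U) (ε / 2))) ⊆ K := by
    rintro _ ⟨x, hx, rfl⟩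
    have hx' : ‖(x : H)‖ ≤ ε / 2 := by
      simpa [Metric.mem_closedBall, dist_eq_norm] using hx
    have hmem : (x : H) ∈ Metric.ball (0 : H) ε := by
      simp only [Metric.mem_ball, dist_zero_right]
      linarith
    have := hball hmem
    rwa [Set.mem_preimage, hfix x x.2] at this
  have hclosed : IsClosed (Subtype.val '' (Metric.closedBall (0 : U) (ε / 2))) := by
    have : Subtype.val '' (Metric.closedBall (0 : U) (ε / 2)) =
        (U : Set H) ∩ Metric.closedBall (0 : H) (ε / 2) := by
      ext y
      constructor
      · rintro ⟨x, hx, rfl⟩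
        exact ⟨x.2, by simpa [Metric.mem_closedBall, dist_eq_norm] using hx⟩
      · rintro ⟨hy, hy'⟩
        exact ⟨⟨y, hy⟩, by simpa [Metric.mem_closedBall, dist_eq_norm] using hy', rfl⟩
    rw [this]
    exact hU.inter Metric.isClosed_closedBall
  have hcompact : IsCompact (Subtype.val '' (Metric.closedBall (0 : U) (ε / 2))) :=
    hKc.of_isClosed_subset hclosed hsub
  have hcompact' : IsCompact (Metric.closedBall (0 : U) (ε / 2)) := by
    rw [Topology.IsEmbedding.subtypeVal.isCompact_iff]
    exact hcompact
  exact FiniteDimensional.of_isCompact_closedBall₀ ℝ (by linarith) hcompact'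

/-- If the difference of the orthogonal projections onto two closed subspaces
`V`, `W` of a real Hilbert space is a compact operator, then `V ∩ W^⊥` and `W ∩ V^⊥` are
finite dimensional. -/
theorem stmt1 {H : Type*} [NormedAddCommGroup H] [InnerProductSpace ℝ H] [CompleteSpace H]
    (V W : Submodule ℝ H) [CompleteSpace V] [CompleteSpace W]
    (hK : IsCompactOperator (fun x : H =>
      ((V.orthogonalProjectionOnto x : H) - (W.orthogonalProjectionOnto x : H)))) :
    FiniteDimensional ℝ (V ⊓ Wᗮ : Submodule ℝ H) ∧
    FiniteDimensional ℝ (W ⊓ Vᗮ : Submodule ℝ H) := by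
  have hVc : IsClosed (V : Set H) := completeSpace_coe_iff_isComplete.mp ‹_› |>.isClosed
  have hWc : IsClosed (W : Set H) := completeSpace_coe_iff_isComplete.mp ‹_› |>.isClosed
  constructor
  · refine aux_findim _ (hVc.inter W.isClosed_orthogonal) hK ?_
    rintro x ⟨hxV, hxW⟩
    simp [(Submodule.starProjection_apply V x).symm.trans (Submodule.starProjection_eq_self_iff.mpr hxV),
      Submodule.orthogonalProjectionOnto_apply_of_mem_orthogonal hxW]
  · refine aux_findim _ (hWc.inter V.isClosed_orthogonal) hK.neg ?_
    rintro x ⟨hxW, hxV⟩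
    simp [(Submodule.starProjection_apply W x).symm.trans (Submodule.starProjection_eq_self_iff.mpr hxW),
      Submodule.orthogonalProjectionOnto_apply_of_mem_orthogonal hxV, Submodule.starProjection_eq_self_iff.mpr hxW,
      (show V.starProjection x = 0 by
        rw [Submodule.starProjection_apply, Submodule.orthogonalProjectionOnto_apply_of_mem_orthogonal hxV,
          Submodule.coe_zero])]
end

section
/- Let X be a real Banach space, and let P, Q : X → X be continuous linear projections (P ∘ P = P and Q ∘ Q = Q) such that P − Q is a compact operator. Then (range P, ker Q) is a Fredholm pair: the intersection range(P) ∩ ker(Q) is finite-dimensional, the sum range(P) + ker(Q) is a closed subspace of X, and the quotient space X / (range(P) + ker(Q)) is finite-dimensional. -/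
open Metric Filter Topology Set

section AuxFredholm
set_option linter.unusedSectionVars false

variable {X : Type*} [NormedAddCommGroup X] [NormedSpace ℝ X] [CompleteSpace X]

/-- Kernel of `1 - k` is finite dimensional for a compact operator `k`. -/
lemma aux_ker (k : X →L[ℝ] X) (hk : IsCompactOperator ⇑k) :
    FiniteDimensional ℝ (LinearMap.ker ((1 - k : X →L[ℝ] X) : X →ₗ[ℝ] X) : Submodule ℝ X) := by
  obtain ⟨C, hC, hsub⟩ := hk.image_closedBall_subset_compact 1
  set N : Submodule ℝ X := LinearMap.ker ((1 - k : X →L[ℝ] X) : X →ₗ[ℝ] X) with hN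
  have hNfix : ∀ x ∈ N, k x = x := by
    intro x hx
    have h : x - k x = 0 := by
      simpa [ContinuousLinearMap.sub_apply] using (LinearMap.mem_ker.mp hx)
    exact (sub_eq_zero.mp h).symm
  have hNclosed : IsClosed (N : Set X) := ContinuousLinearMap.isClosed_ker (1 - k)
  have key : IsCompact ((N : Set X) ∩ closedBall 0 1) := by
    apply hC.of_isClosed_subset (hNclosed.inter isClosed_closedBall)
    rintro x ⟨hxN, hx1⟩
    have := hNfix x hxN
    rw [← this]
    exact hsub ⟨x, hx1, rfl⟩
  have himg : (Subtype.val : N → X) '' closedBall (0 : N) 1 = (N : Set X) ∩ closedBall 0 1 := by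
    ext x
    constructor
    · rintro ⟨⟨y, hy⟩, hball, rfl⟩
      refine ⟨hy, ?_⟩
      simpa [mem_closedBall, dist_zero_right] using hball
    · rintro ⟨hxN, hx1⟩
      refine ⟨⟨x, hxN⟩, ?_, rfl⟩
      simpa [mem_closedBall, dist_zero_right] using hx1
  have hcomp : IsCompact (closedBall (0 : N) 1) := by
    rw [Topology.IsEmbedding.subtypeVal.isCompact_iff, himg]
    exact key
  exact FiniteDimensional.of_isCompact_closedBall₀ ℝ one_pos hcomp

/-- Range of `1 - k` is closed for a compact operator `k`. -/
lemma aux_range_closed (k : X →L[ℝ] X) (hk : IsCompactOperator ⇑k) :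
    IsClosed ((LinearMap.range ((1 - k : X →L[ℝ] X) : X →ₗ[ℝ] X) : Submodule ℝ X) : Set X) := by
  set T : X →L[ℝ] X := 1 - k with hT
  have hTx : ∀ x : X, T x = x - k x := fun x => rfl
  have hxT : ∀ x : X, x = T x + k x := fun x => by rw [hTx]; abel
  set N : Submodule ℝ X := LinearMap.ker (T : X →ₗ[ℝ] X) with hN
  haveI : FiniteDimensional ℝ N := aux_ker k hk
  have hNc : IsClosed (N : Set X) := N.closed_of_finiteDimensional
  have hne : (N : Set X).Nonempty := ⟨0, N.zero_mem⟩
  -- Step 1: a uniform bound on the distance to the kernel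
  have step1 : ∃ c : ℝ, ∀ x : X, infDist x (N : Set X) ≤ c * ‖T x‖ := by
    by_contra hcon
    push_neg at hcon
    have hseq : ∀ n : ℕ, ∃ x : X, ((n : ℝ) + 1) * ‖T x‖ < infDist x (N : Set X) :=
      fun n => hcon ((n : ℝ) + 1)
    choose x hx using hseq
    have hdpos : ∀ n, 0 < infDist (x n) (N : Set X) := fun n =>
      lt_of_le_of_lt (by positivity) (hx n)
    have hy : ∀ n : ℕ, ∃ y ∈ (N : Set X), dist (x n) y < 2 * infDist (x n) (N : Set X) := by
      intro n
      rw [← Metric.infDist_lt_iff hne]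
      linarith [hdpos n]
    choose y hyN hyd using hy
    have hxy_pos : ∀ n, 0 < ‖x n - y n‖ := by
      intro n
      have h1 : infDist (x n) (N : Set X) ≤ dist (x n) (y n) :=
        Metric.infDist_le_dist_of_mem (hyN n)
      rw [dist_eq_norm] at h1
      linarith [hdpos n]
    set z : ℕ → X := fun n => ‖x n - y n‖⁻¹ • (x n - y n) with hz
    have hz1 : ∀ n, ‖z n‖ = 1 := by
      intro n
      have e : z n = ‖x n - y n‖⁻¹ • (x n - y n) := rfl
      rw [e, norm_smul, norm_inv, norm_norm, inv_mul_cancel₀ (hxy_pos n).ne']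
    have hTy : ∀ n, T (y n) = 0 := fun n => LinearMap.mem_ker.mp (hyN n)
    have hTz : ∀ n, ‖T (z n)‖ ≤ 1 / ((n : ℝ) + 1) := by
      intro n
      have e0 : z n = ‖x n - y n‖⁻¹ • (x n - y n) := rfl
      have e1 : T (z n) = ‖x n - y n‖⁻¹ • T (x n) := by
        rw [e0, map_smul, map_sub, hTy n, sub_zero]
      have hn : (0 : ℝ) < (n : ℝ) + 1 := by positivity
      have h3 : infDist (x n) (N : Set X) ≤ dist (x n) (y n) :=
        Metric.infDist_le_dist_of_mem (hyN n)
      rw [dist_eq_norm] at h3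
      rw [e1, norm_smul, norm_inv, norm_norm, inv_mul_le_iff₀ (hxy_pos n), one_div,
        ← div_eq_mul_inv, le_div_iff₀ hn]
      nlinarith [hx n, h3, norm_nonneg (T (x n))]
    have hzN : ∀ n, ∀ w ∈ (N : Set X), (1 : ℝ) / 2 ≤ ‖z n - w‖ := by
      intro n w hw
      have hmem : y n + ‖x n - y n‖ • w ∈ (N : Set X) :=
        N.add_mem (hyN n) (N.smul_mem _ hw)
      have h1 : infDist (x n) (N : Set X) ≤ ‖x n - (y n + ‖x n - y n‖ • w)‖ := by
        rw [← dist_eq_norm]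
        exact Metric.infDist_le_dist_of_mem hmem
      have h2 : z n - w = ‖x n - y n‖⁻¹ • (x n - (y n + ‖x n - y n‖ • w)) := by
        have e0 : z n = ‖x n - y n‖⁻¹ • (x n - y n) := rfl
        rw [e0, smul_sub, smul_sub, smul_add, smul_smul,
          inv_mul_cancel₀ (hxy_pos n).ne', one_smul]
        abel
      rw [h2, norm_smul, norm_inv, norm_norm]
      rw [le_inv_mul_iff₀ (hxy_pos n)]
      calc ‖x n - y n‖ * (1 / 2) ≤ (2 * infDist (x n) (N : Set X)) * (1 / 2) := by
            have := hyd n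
            rw [dist_eq_norm] at this
            nlinarith [this]
        _ = infDist (x n) (N : Set X) := by ring
        _ ≤ _ := h1
    -- compactness contradiction
    obtain ⟨C, hC, hsub⟩ := hk.image_closedBall_subset_compact 1
    have hmemC : ∀ n, k (z n) ∈ C := by
      intro n
      exact hsub ⟨z n, by simp [mem_closedBall, dist_zero_right, (hz1 n).le], rfl⟩
    obtain ⟨v, hvC, φ, hφ, hconv⟩ := hC.tendsto_subseq hmemC
    have hTz0 : Tendsto (fun n => T (z n)) atTop (𝓝 0) := by
      have hb : Tendsto (fun n : ℕ => 1 / ((n : ℝ) + 1)) atTop (𝓝 0) :=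
        tendsto_one_div_add_atTop_nhds_zero_nat
      have : Tendsto (fun n => ‖T (z n)‖) atTop (𝓝 0) :=
        squeeze_zero (fun n => norm_nonneg _) hTz hb
      exact tendsto_zero_iff_norm_tendsto_zero.mpr this
    have hzconv : Tendsto (fun i => z (φ i)) atTop (𝓝 v) := by
      have e : ∀ i, z (φ i) = T (z (φ i)) + k (z (φ i)) := fun i => hxT _
      have : Tendsto (fun i => T (z (φ i)) + k (z (φ i))) atTop (𝓝 (0 + v)) :=
        ((hTz0.comp hφ.tendsto_atTop).add hconv)
      rw [zero_add] at this
      exact this.congr fun i => (e i).symm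
    have hvN : v ∈ (N : Set X) := by
      have h1 : Tendsto (fun i => T (z (φ i))) atTop (𝓝 (T v)) :=
        (T.continuous.tendsto v).comp hzconv
      have h2 : Tendsto (fun i => T (z (φ i))) atTop (𝓝 0) := hTz0.comp hφ.tendsto_atTop
      have : T v = 0 := tendsto_nhds_unique h1 h2
      exact LinearMap.mem_ker.mpr this
    have hlim : Tendsto (fun i => ‖z (φ i) - v‖) atTop (𝓝 0) := by
      have := (hzconv.sub (tendsto_const_nhds (x := v)))
      rw [sub_self] at this
      simpa using this.norm
    have hge : (1 : ℝ) / 2 ≤ 0 :=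
      ge_of_tendsto hlim (Eventually.of_forall fun i => hzN (φ i) v hvN)
    linarith
  obtain ⟨c, hc⟩ := step1
  -- Step 2: sequential closedness
  apply IsSeqClosed.isClosed
  intro u yy hu huy
  choose w hw using fun n => @id (∃ y, T y = u n) (LinearMap.mem_range.mp (hu n))
  obtain ⟨M, hM⟩ : ∃ M : ℝ, ∀ n, ‖u n‖ ≤ M := by
    obtain ⟨M, hM⟩ := huy.norm.bddAbove_range
    exact ⟨M, fun n => hM ⟨n, rfl⟩⟩
  have hMn : 0 ≤ M := le_trans (norm_nonneg _) (hM 0)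
  have hdb : ∀ n, infDist (w n) (N : Set X) < |c| * M + 1 := by
    intro n
    have h1 : infDist (w n) (N : Set X) ≤ c * ‖T (w n)‖ := hc (w n)
    have h2 : c * ‖T (w n)‖ ≤ |c| * ‖T (w n)‖ :=
      mul_le_mul_of_nonneg_right (le_abs_self c) (norm_nonneg _)
    have h3 : |c| * ‖T (w n)‖ ≤ |c| * M := by
      apply mul_le_mul_of_nonneg_left _ (abs_nonneg c)
      rw [hw n]; exact hM n
    linarith
  have hv : ∀ n : ℕ, ∃ v ∈ (N : Set X), dist (w n) v < |c| * M + 1 := by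
    intro n
    rw [← Metric.infDist_lt_iff hne]
    exact hdb n
  choose v hvN hvd using hv
  set g : ℕ → X := fun n => w n - v n with hg
  have hTg : ∀ n, T (g n) = u n := by
    intro n
    rw [hg]
    simp only [map_sub, @id (T (v n) = 0) (LinearMap.mem_ker.mp (hvN n)), sub_zero]
    exact hw n
  have hgb : ∀ n, g n ∈ closedBall (0 : X) (|c| * M + 1) := by
    intro n
    rw [mem_closedBall, dist_zero_right]
    have := hvd n
    rw [dist_eq_norm] at this
    exact this.le
  obtain ⟨C, hC, hsub⟩ := hk.image_closedBall_subset_compact (|c| * M + 1)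
  have hmemC : ∀ n, k (g n) ∈ C := fun n => hsub ⟨g n, hgb n, rfl⟩
  obtain ⟨vv, hvvC, φ, hφ, hconv⟩ := hC.tendsto_subseq hmemC
  have hgconv : Tendsto (fun i => g (φ i)) atTop (𝓝 (yy + vv)) := by
    have e : ∀ i, g (φ i) = u (φ i) + k (g (φ i)) := by
      intro i
      conv_lhs => rw [hxT (g (φ i))]
      rw [hTg]
    have : Tendsto (fun i => u (φ i) + k (g (φ i))) atTop (𝓝 (yy + vv)) :=
      (huy.comp hφ.tendsto_atTop).add hconv
    exact this.congr fun i => (e i).symm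
  have hTfin : T (yy + vv) = yy := by
    have h1 : Tendsto (fun i => T (g (φ i))) atTop (𝓝 (T (yy + vv))) :=
      (T.continuous.tendsto _).comp hgconv
    have h2 : Tendsto (fun i => T (g (φ i))) atTop (𝓝 yy) := by
      have := huy.comp hφ.tendsto_atTop
      exact this.congr fun i => (hTg (φ i)).symm
    exact tendsto_nhds_unique h1 h2
  exact ⟨yy + vv, hTfin⟩

/-- The quotient by the range of `1 - k` is finite dimensional for a compact `k`. -/
lemma aux_quot (k : X →L[ℝ] X) (hk : IsCompactOperator ⇑k) :
    FiniteDimensional ℝ (X ⧸ (LinearMap.range ((1 - k : X →L[ℝ] X) : X →ₗ[ℝ] X) : Submodule ℝ X)) := by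
  set T : X →L[ℝ] X := 1 - k with hT
  set R : Submodule ℝ X := LinearMap.range (T : X →ₗ[ℝ] X) with hR
  haveI : IsClosed (R : Set X) := aux_range_closed k hk
  obtain ⟨C, hC, hsub⟩ := hk.image_closedBall_subset_compact 2
  have hcont : Continuous R.mkQ := R.isOpenQuotientMap_mkQ.continuous
  have hball : closedBall (0 : X ⧸ R) 1 ⊆ ⇑R.mkQ '' C := by
    intro ξ hξ
    have hξ1 : ‖ξ‖ ≤ 1 := by simpa [mem_closedBall, dist_zero_right] using hξ
    obtain ⟨m, hm, hmn⟩ := Submodule.Quotient.norm_mk_lt ξ (one_pos)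
    have hm2 : m ∈ closedBall (0 : X) 2 := by
      rw [mem_closedBall, dist_zero_right]
      linarith
    have hTm : (Submodule.Quotient.mk (T m) : X ⧸ R) = 0 :=
      (Submodule.Quotient.mk_eq_zero R).mpr ⟨m, rfl⟩
    have : ξ = R.mkQ (k m) := by
      have e : m = T m + k m := by rw [hT]; simp [ContinuousLinearMap.sub_apply]
      calc ξ = Submodule.Quotient.mk m := hm.symm
        _ = Submodule.Quotient.mk (T m + k m) := by rw [← e]
        _ = Submodule.Quotient.mk (T m) + Submodule.Quotient.mk (k m) := by
            rw [Submodule.Quotient.mk_add]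
        _ = R.mkQ (k m) := by rw [hTm, zero_add]; rfl
    rw [this]
    exact ⟨k m, hsub ⟨m, hm2, rfl⟩, rfl⟩
  have hcomp : IsCompact (closedBall (0 : X ⧸ R) 1) :=
    (hC.image hcont).of_isClosed_subset isClosed_closedBall hball
  exact FiniteDimensional.of_isCompact_closedBall₀ ℝ one_pos hcomp

/-- A submodule containing a closed finite-codimensional submodule is closed and
finite-codimensional. -/
lemma aux_up {R V : Submodule ℝ X} (hRc : IsClosed (R : Set X))
    [FiniteDimensional ℝ (X ⧸ R)] (hRV : R ≤ V) :
    IsClosed (V : Set X) ∧ FiniteDimensional ℝ (X ⧸ V) := by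
  haveI := hRc
  constructor
  · haveI : FiniteDimensional ℝ (Submodule.map R.mkQ V) :=
      FiniteDimensional.finiteDimensional_submodule _
    have h2 : IsClosed ((Submodule.map R.mkQ V : Submodule ℝ (X ⧸ R)) : Set (X ⧸ R)) :=
      Submodule.closed_of_finiteDimensional _
    have h3 : (V : Set X) = ⇑R.mkQ ⁻¹' ((Submodule.map R.mkQ V : Submodule ℝ (X ⧸ R)) : Set (X ⧸ R)) := by
      have e : Submodule.comap R.mkQ (Submodule.map R.mkQ V) = V := by
        rw [Submodule.comap_map_eq, Submodule.ker_mkQ, sup_eq_left.mpr hRV]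
      conv_lhs => rw [← e]
      rfl
    rw [h3]
    exact h2.preimage R.isOpenQuotientMap_mkQ.continuous
  · let q : (X ⧸ R) →ₗ[ℝ] X ⧸ V :=
      Submodule.mapQ R V LinearMap.id (by simpa using hRV)
    have hq : Function.Surjective q := by
      intro ξ
      obtain ⟨x, rfl⟩ := Submodule.Quotient.mk_surjective V ξ
      exact ⟨Submodule.Quotient.mk x, by simp [q, Submodule.mapQ_apply]⟩
    exact Module.Finite.of_surjective q hq

end AuxFredholm

/-- If `P, Q` are continuous linear projections on a real Banach space `X`
whose difference is a compact operator, then `(range P, ker Q)` is a Fredholm pair: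
`range P ∩ ker Q` is finite dimensional, `range P + ker Q` is closed, and the quotient
`X / (range P + ker Q)` is finite dimensional. -/
theorem stmt2 {X : Type*} [NormedAddCommGroup X] [NormedSpace ℝ X] [CompleteSpace X]
    (P Q : X →L[ℝ] X) (hP : ∀ x, P (P x) = P x) (hQ : ∀ x, Q (Q x) = Q x)
    (hPQ : IsCompactOperator (fun x => P x - Q x)) :
    FiniteDimensional ℝ (LinearMap.range (P : X →ₗ[ℝ] X) ⊓ LinearMap.ker (Q : X →ₗ[ℝ] X) : Submodule ℝ X) ∧
    IsClosed ((LinearMap.range (P : X →ₗ[ℝ] X) ⊔ LinearMap.ker (Q : X →ₗ[ℝ] X) : Submodule ℝ X) : Set X) ∧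
    FiniteDimensional ℝ
      (X ⧸ (LinearMap.range (P : X →ₗ[ℝ] X) ⊔ LinearMap.ker (Q : X →ₗ[ℝ] X) : Submodule ℝ X)) := by
  have hPQ' : IsCompactOperator ⇑(P - Q) := by
    have e : (fun x => P x - Q x) = ⇑(P - Q) := by ext x; simp
    rwa [e] at hPQ
  have part1 : FiniteDimensional ℝ
      (LinearMap.range (P : X →ₗ[ℝ] X) ⊓ LinearMap.ker (Q : X →ₗ[ℝ] X) : Submodule ℝ X) := by
    set k₁ : X →L[ℝ] X := (P - Q).comp P with hk₁def
    have hk₁ : IsCompactOperator ⇑k₁ := by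
      have h := hPQ'.comp_clm P
      rwa [← ContinuousLinearMap.coe_comp'] at h
    haveI := aux_ker k₁ hk₁
    apply Submodule.finiteDimensional_of_le (S₂ := LinearMap.ker ((1 - k₁ : X →L[ℝ] X) : X →ₗ[ℝ] X))
    rintro x ⟨hx1, hx2⟩
    obtain ⟨y, hy⟩ : ∃ y, P y = x := LinearMap.mem_range.mp hx1
    have hPx : P x = x := by rw [← hy, hP]
    have hQx : Q x = 0 := hx2
    have : (1 - k₁) x = 0 := by
      simp [hk₁def, ContinuousLinearMap.sub_apply, ContinuousLinearMap.comp_apply,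
        ContinuousLinearMap.one_apply, hPx, hQx]
    exact LinearMap.mem_ker.mpr this
  set k₂ : X →L[ℝ] X := (1 - P).comp (Q - P) with hk₂def
  have hQP : IsCompactOperator ⇑(Q - P) := by
    have h := hPQ'.neg
    have e : (-⇑(P - Q)) = ⇑(Q - P) := by
      ext x; simp [neg_sub]
    rwa [e] at h
  have hk₂ : IsCompactOperator ⇑k₂ := by
    have h := hQP.clm_comp (1 - P)
    rwa [← ContinuousLinearMap.coe_comp'] at h
  have hRle : LinearMap.range ((1 - k₂ : X →L[ℝ] X) : X →ₗ[ℝ] X) ≤ LinearMap.range (P : X →ₗ[ℝ] X) ⊔ LinearMap.ker (Q : X →ₗ[ℝ] X) := by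
    rintro x hx
    obtain ⟨y, rfl⟩ := LinearMap.mem_range.mp hx
    have hval : (1 - k₂) y = P (Q y) + (y - Q y) := by
      simp only [hk₂def, ContinuousLinearMap.sub_apply, ContinuousLinearMap.comp_apply,
        ContinuousLinearMap.one_apply, map_sub, hP]
      abel
    rw [show ((1 - k₂ : X →L[ℝ] X) : X →ₗ[ℝ] X) y = (1 - k₂) y from rfl, hval]
    refine Submodule.add_mem_sup (LinearMap.mem_range.mpr ⟨Q y, rfl⟩) ?_
    have : Q (y - Q y) = 0 := by rw [map_sub, hQ, sub_self]
    exact LinearMap.mem_ker.mpr this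
  have hclosed := aux_range_closed k₂ hk₂
  haveI := aux_quot k₂ hk₂
  obtain ⟨h2, h3⟩ := aux_up hclosed hRle
  exact ⟨part1, h2, h3⟩
end

section
/- Let X and Y be real Banach spaces with continuous dual spaces X* and Y*. Let A : X → X* and B : Y → Y* be strictly monotone maps, i.e. (A x₁ − A x₂)(x₁ − x₂) > 0 whenever x₁ ≠ x₂, and (B y₁ − B y₂)(y₁ − y₂) > 0 whenever y₁ ≠ y₂. Let k₁ : X × Y → X* and k₂ : X × Y → Y* be maps, and let f : X × Y → ℝ be Fréchet differentiable with df(u,v)[(ξ,η)] = (A u + k₁(u,v))(ξ) + (−B v + k₂(u,v))(η) for all u, ξ ∈ X and v, η ∈ Y. Suppose (u,v) ∈ X × Y and ξ₀ ∈ X, μ₀ ∈ Y satisfy A ξ₀ = −k₁(u,v) and B μ₀ = k₂(u,v). Then df(u,v)[(ξ₀ − u, v − μ₀)] = −(A u − A ξ₀)(u − ξ₀) − (B v − B μ₀)(v − μ₀) ≤ 0, and equality holds if and only if df(u,v) = 0. -/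
/-- Abstract form of the claim that
`V(u,v) = (−u − D_p⁻¹K_u(u,v), v − D_q⁻¹K_v(u,v))` is gradient-like: if `A`, `B` are
strictly monotone maps into the dual, `df(u,v)[(ξ,η)] = (Au + k₁(u,v))ξ + (−Bv + k₂(u,v))η`,
and `Aξ₀ = −k₁(u,v)`, `Bμ₀ = k₂(u,v)`, then
`df(u,v)[(ξ₀ − u, v − μ₀)] = −(Au − Aξ₀)(u − ξ₀) − (Bv − Bμ₀)(v − μ₀) ≤ 0`,
with equality iff `df(u,v) = 0`. -/
theorem stmt3 {X Y : Type*} [NormedAddCommGroup X] [NormedSpace ℝ X]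
    [NormedAddCommGroup Y] [NormedSpace ℝ Y]
    (A : X → X →L[ℝ] ℝ) (B : Y → Y →L[ℝ] ℝ)
    (hA : ∀ x₁ x₂ : X, x₁ ≠ x₂ → 0 < (A x₁ - A x₂) (x₁ - x₂))
    (hB : ∀ y₁ y₂ : Y, y₁ ≠ y₂ → 0 < (B y₁ - B y₂) (y₁ - y₂))
    (k₁ : X × Y → X →L[ℝ] ℝ) (k₂ : X × Y → Y →L[ℝ] ℝ)
    (f : X × Y → ℝ) (hf : Differentiable ℝ f)
    (hdf : ∀ (u : X) (v : Y) (ξ : X) (η : Y),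
      fderiv ℝ f (u, v) (ξ, η) = (A u + k₁ (u, v)) ξ + (-B v + k₂ (u, v)) η)
    (u : X) (v : Y) (ξ₀ : X) (μ₀ : Y)
    (hξ₀ : A ξ₀ = -k₁ (u, v)) (hμ₀ : B μ₀ = k₂ (u, v)) :
    fderiv ℝ f (u, v) (ξ₀ - u, v - μ₀) =
      -((A u - A ξ₀) (u - ξ₀)) - (B v - B μ₀) (v - μ₀) ∧
    fderiv ℝ f (u, v) (ξ₀ - u, v - μ₀) ≤ 0 ∧
    (fderiv ℝ f (u, v) (ξ₀ - u, v - μ₀) = 0 ↔ fderiv ℝ f (u, v) = 0) := by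
  have hk₁ : k₁ (u, v) = -A ξ₀ := by rw [hξ₀, neg_neg]
  have heq : fderiv ℝ f (u, v) (ξ₀ - u, v - μ₀) =
      -((A u - A ξ₀) (u - ξ₀)) - (B v - B μ₀) (v - μ₀) := by
    rw [hdf u v (ξ₀ - u) (v - μ₀), hk₁, hμ₀]
    simp only [ContinuousLinearMap.add_apply, ContinuousLinearMap.neg_apply,
      ContinuousLinearMap.sub_apply, map_sub]
    ring
  have ha : 0 ≤ (A u - A ξ₀) (u - ξ₀) := by
    by_cases h : u = ξ₀
    · simp [h]
    · exact le_of_lt (hA u ξ₀ h)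
  have hb : 0 ≤ (B v - B μ₀) (v - μ₀) := by
    by_cases h : v = μ₀
    · simp [h]
    · exact le_of_lt (hB v μ₀ h)
  refine ⟨heq, by rw [heq]; linarith, ?_⟩
  constructor
  · intro h0
    rw [heq] at h0
    have hu : u = ξ₀ := by
      by_contra h
      have := hA u ξ₀ h
      linarith
    have hv : v = μ₀ := by
      by_contra h
      have := hB v μ₀ h
      linarith
    refine ContinuousLinearMap.ext fun p => ?_
    obtain ⟨p1, p2⟩ := p
    rw [hdf u v p1 p2, hk₁, ← hμ₀, ← hu, ← hv]
    simp
  · intro h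
    rw [h]
    simp
end

section
/- Let E and F be real Banach spaces and set X = E × F. Let K : X → X be a continuous map that sends bounded subsets of X to totally bounded subsets and satisfies the linear growth bound ‖K(z)‖ ≤ C(1 + ‖z‖) for all z ∈ X and some constant C ≥ 0. Define the vector field W : X → X by W(u,v) = (−u, v) + K(u,v). Suppose φ : ℝ × X → X is a global flow of W, i.e. φ(0, z) = z for all z and, for each fixed z ∈ X, the curve t ↦ φ(t, z) is differentiable with derivative W(φ(t, z)) at every t ∈ ℝ. Then for every essentially vertical set A ⊆ X and every T ≥ 0, the image φ([0,T] × A) is essentially vertical. -/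
open Pointwise


/-- A subset `A` of a product `E × F` of normed spaces is *essentially vertical* if it is
bounded and its projection onto the first factor is totally bounded. -/
def EssentiallyVertical {E F : Type*} [NormedAddCommGroup E] [NormedAddCommGroup F]
    (A : Set (E × F)) : Prop :=
  Bornology.IsBounded A ∧ TotallyBounded (Prod.fst '' A)

/-- Mean value theorem, set version: if the derivative of `g` stays in a closed convex set `s`
on `[0, t]` (with `t > 0`), then the average slope `t⁻¹ • (g t - g 0)` belongs to `s`. -/
lemma avg_slope_mem_of_hasDerivAt_mem {E : Type*} [NormedAddCommGroup E] [NormedSpace ℝ E]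
    {s : Set E} (hconv : Convex ℝ s) (hclosed : IsClosed s)
    {g g' : ℝ → E} (hg : ∀ r, HasDerivAt g (g' r) r)
    {t : ℝ} (ht : 0 < t) (hmem : ∀ r ∈ Set.Icc (0 : ℝ) t, g' r ∈ s) :
    t⁻¹ • (g t - g 0) ∈ s := by
  by_contra hx
  obtain ⟨f, u, hfs, hfx⟩ := geometric_hahn_banach_closed_point hconv hclosed hx
  set ψ : ℝ → ℝ := fun r => u * r - f (g r) with hψ
  have hψd : ∀ r : ℝ, HasDerivAt ψ (u - f (g' r)) r := by
    intro r
    have h1 : HasDerivAt (fun r : ℝ => u * r) u r := by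
      simpa using (hasDerivAt_id r).const_mul u
    exact h1.sub (f.hasFDerivAt.comp_hasDerivAt r (hg r))
  have hmono : StrictMonoOn ψ (Set.Icc 0 t) := by
    apply strictMonoOn_of_deriv_pos (convex_Icc 0 t)
    · exact fun x _ => ((hψd x).differentiableAt.continuousAt).continuousWithinAt
    · intro x hx'
      rw [interior_Icc] at hx'
      rw [(hψd x).deriv]
      have := hfs _ (hmem x ⟨hx'.1.le, hx'.2.le⟩)
      linarith
  have hlt : ψ 0 < ψ t := hmono ⟨le_rfl, ht.le⟩ ⟨ht.le, le_rfl⟩ ht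
  have h0 : f (g t) - f (g 0) < u * t := by
    simp only [hψ, mul_zero] at hlt
    linarith
  have h1 : u < t⁻¹ * (f (g t) - f (g 0)) := by
    have := hfx
    rw [map_smul, map_sub] at this
    simpa [smul_eq_mul] using this
  have h2 : u * t < f (g t) - f (g 0) := by
    have := mul_lt_mul_of_pos_right h1 ht
    calc u * t < t⁻¹ * (f (g t) - f (g 0)) * t := this
      _ = f (g t) - f (g 0) := by field_simp
  linarith

/-- Let `W(u,v) = (−u, v) + K(u,v)` with `K` continuous, compact (bounded sets
are mapped to totally bounded ones), and of at most linear growth. If `φ` is a global flow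
of `W`, then for every essentially vertical set `A` and every `T ≥ 0` the image
`φ([0,T] × A)` is essentially vertical. -/
theorem stmt5 {E F : Type*} [NormedAddCommGroup E] [NormedSpace ℝ E] [CompleteSpace E]
    [NormedAddCommGroup F] [NormedSpace ℝ F] [CompleteSpace F]
    (K : E × F → E × F) (hKcont : Continuous K)
    (hKcomp : ∀ S : Set (E × F), Bornology.IsBounded S → TotallyBounded (K '' S))
    (C : ℝ) (hC : 0 ≤ C) (hKgrowth : ∀ z : E × F, ‖K z‖ ≤ C * (1 + ‖z‖))
    (W : E × F → E × F) (hW : ∀ z : E × F, W z = (-z.1, z.2) + K z)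
    (φ : ℝ × (E × F) → E × F)
    (hφ0 : ∀ z : E × F, φ (0, z) = z)
    (hφ' : ∀ (z : E × F) (t : ℝ), HasDerivAt (fun s => φ (s, z)) (W (φ (t, z))) t)
    (A : Set (E × F)) (hA : EssentiallyVertical A) (T : ℝ) (hT : 0 ≤ T) :
    EssentiallyVertical (φ '' (Set.Icc (0 : ℝ) T ×ˢ A)) := by
  classical
  obtain ⟨hAbdd, hAtb⟩ := hA
  -- A radius for A
  obtain ⟨R₀, hR₀⟩ := hAbdd.subset_closedBall 0
  set R : ℝ := max R₀ 0 with hRdef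
  have hR0 : (0 : ℝ) ≤ R := le_max_right _ _
  have hRsub : A ⊆ Metric.closedBall 0 R :=
    hR₀.trans (Metric.closedBall_subset_closedBall (le_max_left _ _))
  -- Growth bound on W
  have hWnorm : ∀ y : E × F, ‖W y‖ ≤ (1 + C) * ‖y‖ + C := by
    intro y
    rw [hW]
    have h1 : ‖((-y.1, y.2) : E × F)‖ = ‖y‖ := by
      simp [Prod.norm_def]
    calc ‖(-y.1, y.2) + K y‖ ≤ ‖((-y.1, y.2) : E × F)‖ + ‖K y‖ := norm_add_le _ _
      _ ≤ ‖y‖ + C * (1 + ‖y‖) := by rw [h1]; exact add_le_add le_rfl (hKgrowth y)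
      _ = (1 + C) * ‖y‖ + C := by ring
  -- Gronwall bound: M bounds all trajectories starting in A on [0,T]
  set M : ℝ := gronwallBound R (1 + C) C T with hMdef
  have hgron : ∀ z ∈ A, ∀ t ∈ Set.Icc (0 : ℝ) T, ‖φ (t, z)‖ ≤ M := by
    intro z hz t htm
    have hbase : ∀ x ∈ Set.Icc (0 : ℝ) T,
        ‖φ (x, z)‖ ≤ gronwallBound R (1 + C) C (x - 0) := by
      apply norm_le_gronwallBound_of_norm_deriv_right_le
        (f' := fun s => W (φ (s, z)))
      · exact fun x _ => ((hφ' z x).continuousAt).continuousWithinAt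
      · exact fun x _ => (hφ' z x).hasDerivWithinAt
      · rw [hφ0 z]
        simpa using hRsub hz
      · exact fun x _ => hWnorm _
    have h1 := hbase t htm
    have hKpos : (0 : ℝ) < 1 + C := by linarith
    have hmono : gronwallBound R (1 + C) C (t - 0) ≤ M := by
      rw [hMdef, gronwallBound_of_K_ne_0 hKpos.ne']
      dsimp only
      have he : Real.exp ((1 + C) * (t - 0)) ≤ Real.exp ((1 + C) * T) := by
        apply Real.exp_le_exp.2
        have := htm.2
        nlinarith
      have h2 : (0 : ℝ) ≤ C / (1 + C) := by positivity
      nlinarith [Real.exp_pos ((1 + C) * (t - 0))]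
    exact h1.trans hmono
  have hM0 : (0 : ℝ) ≤ M := by
    rcases Set.eq_empty_or_nonempty A with hAe | ⟨z₀, hz₀⟩
    · -- if A is empty, only need M such that... just compute directly
      rw [hMdef, gronwallBound_of_K_ne_0 (by linarith : (1 : ℝ) + C ≠ 0)]
      have h1 : (1 : ℝ) ≤ Real.exp ((1 + C) * T) := by
        apply Real.one_le_exp
        positivity
      have h2 : (0 : ℝ) ≤ C / (1 + C) := by positivity
      nlinarith [Real.exp_pos ((1 + C) * T)]
    · have := hgron z₀ hz₀ 0 ⟨le_rfl, hT⟩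
      exact (norm_nonneg _).trans this
  -- The image is bounded
  have himg_sub : φ '' (Set.Icc (0 : ℝ) T ×ˢ A) ⊆ Metric.closedBall 0 M := by
    rintro _ ⟨⟨t, z⟩, ⟨htm, hz⟩, rfl⟩
    simpa using hgron z hz t htm
  refine ⟨Metric.isBounded_closedBall.subset himg_sub, ?_⟩
  -- Totally bounded projection
  -- The compact "ingredient" sets
  set S : Set (E × F) := K '' Metric.closedBall 0 M with hSdef
  have hS : TotallyBounded S := hKcomp _ Metric.isBounded_closedBall
  set Q₁ : Set E := closure (Prod.fst '' S) with hQ₁def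
  have hQ₁c : IsCompact Q₁ :=
    TotallyBounded.isCompact_of_isClosed (hS.image uniformContinuous_fst).closure
      isClosed_closure
  set Q : Set E := (fun p : ℝ × E => p.1 • p.2) '' (Set.Icc 0 (Real.exp T) ×ˢ Q₁) with hQdef
  have hQc : IsCompact Q := (isCompact_Icc.prod hQ₁c).image continuous_smul
  set D : Set E := closure (convexHull ℝ Q) with hDdef
  have hDc : IsCompact D :=
    TotallyBounded.isCompact_of_isClosed
      (totallyBounded_convexHull.2 hQc.totallyBounded).closure isClosed_closure
  have hDconv : Convex ℝ D := (convex_convexHull ℝ Q).closure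
  have hDclosed : IsClosed D := isClosed_closure
  have hQD : Q ⊆ D := (subset_convexHull ℝ Q).trans subset_closure
  have hDne : D.Nonempty := by
    refine ⟨(0 : ℝ) • (K 0).1, hQD ?_⟩
    exact ⟨(0, (K 0).1), ⟨⟨le_rfl, Real.exp_pos T |>.le⟩,
      subset_closure ⟨K 0, ⟨0, by simpa using hM0, rfl⟩, rfl⟩⟩, rfl⟩
  obtain ⟨d₀, hd₀⟩ := hDne
  -- The big compact set containing the projection
  set cA : Set E := closure (Prod.fst '' A) with hcAdef
  have hcAc : IsCompact cA := TotallyBounded.isCompact_of_isClosed hAtb.closure isClosed_closure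
  set P : Set E := ((fun p : ℝ × E => p.1 • p.2) '' (Set.Icc 0 1 ×ˢ cA))
      + ((fun p : ℝ × E => p.1 • p.2) '' (Set.Icc 0 T ×ˢ D)) with hPdef
  have hPc : IsCompact P :=
    ((isCompact_Icc.prod hcAc).image continuous_smul).add
      ((isCompact_Icc.prod hDc).image continuous_smul)
  -- Key claim: projections of trajectories lie in P
  have hkey : Prod.fst '' (φ '' (Set.Icc (0 : ℝ) T ×ˢ A)) ⊆ P := by
    rintro _ ⟨_, ⟨⟨t, z⟩, ⟨⟨ht0, htT⟩, hz⟩, rfl⟩, rfl⟩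
    -- the auxiliary function g
    set g : ℝ → E := fun s => Real.exp s • (φ (s, z)).1 with hgdef
    have hg0 : g 0 = z.1 := by simp [hgdef, hφ0 z]
    have hgd : ∀ r : ℝ, HasDerivAt g (Real.exp r • (K (φ (r, z))).1) r := by
      intro r
      have h1 : HasDerivAt (fun s => (φ (s, z)).1) ((W (φ (r, z))).1) r :=
        (ContinuousLinearMap.fst ℝ E F).hasFDerivAt.comp_hasDerivAt r (hφ' z r)
      have h2 := (Real.hasDerivAt_exp r).smul h1
      convert h2 using 1
      · rfl
      rw [hW (φ (r, z))]
      simp only [Prod.fst_add, Prod.fst_neg]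
      module
    rcases eq_or_lt_of_le ht0 with h0 | h0
    · -- t = 0
      subst h0
      have heq : (φ (0, z)).1 = (1 : ℝ) • z.1 + (0 : ℝ) • d₀ := by
        rw [hφ0 z]; simp
      rw [heq]
      exact Set.add_mem_add
        ⟨(1, z.1), ⟨⟨zero_le_one, le_rfl⟩, subset_closure ⟨z, hz, rfl⟩⟩, rfl⟩
        ⟨(0, d₀), ⟨⟨le_rfl, hT⟩, hd₀⟩, rfl⟩
    · -- t > 0
      have hder_mem : ∀ r ∈ Set.Icc (0 : ℝ) t, Real.exp r • (K (φ (r, z))).1 ∈ D := by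
        intro r hr
        apply hQD
        refine ⟨(Real.exp r, (K (φ (r, z))).1),
          ⟨⟨(Real.exp_pos r).le, Real.exp_le_exp.2 (hr.2.trans htT)⟩, ?_⟩, rfl⟩
        exact subset_closure ⟨K (φ (r, z)),
          ⟨φ (r, z), by simpa using hgron z hz r ⟨hr.1, hr.2.trans htT⟩, rfl⟩, rfl⟩
      have hd := avg_slope_mem_of_hasDerivAt_mem hDconv hDclosed hgd h0 hder_mem
      have ht' : t ≠ 0 := h0.ne'
      have heq : (φ (t, z)).1 = Real.exp (-t) • z.1
          + (Real.exp (-t) * t) • (t⁻¹ • (g t - g 0)) := by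
        rw [smul_smul, mul_assoc, mul_inv_cancel₀ ht', mul_one, hg0]
        have h1 : Real.exp (-t) • z.1 + Real.exp (-t) • (g t - z.1)
            = Real.exp (-t) • g t := by rw [← smul_add]; congr 1; abel
        rw [h1, hgdef]
        simp only []
        rw [smul_smul, ← Real.exp_add, neg_add_cancel, Real.exp_zero, one_smul]
      rw [heq]
      refine Set.add_mem_add
        ⟨(Real.exp (-t), z.1), ⟨⟨(Real.exp_pos _).le,
          Real.exp_le_one_iff.2 (neg_nonpos.2 ht0)⟩, subset_closure ⟨z, hz, rfl⟩⟩, rfl⟩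
        ⟨(Real.exp (-t) * t, t⁻¹ • (g t - g 0)), ⟨⟨by positivity, ?_⟩, hd⟩, rfl⟩
      have he1 : Real.exp (-t) ≤ 1 := Real.exp_le_one_iff.2 (neg_nonpos.2 ht0)
      nlinarith [Real.exp_pos (-t)]
  exact (hPc.totallyBounded).subset hkey
end

section
/- Let n ≥ 1 and let p ≥ 1 be a real number. Then there exists a constant c > 0 such that for all vectors a, b in the Euclidean space ℝⁿ: ⟨(1 + ‖a‖²)^{p−1}·a − (1 + ‖b‖²)^{p−1}·b, a − b⟩ ≥ c·‖a − b‖^{2p}, where ⟨·,·⟩ is the Euclidean inner product. In particular, the map a ↦ (1 + ‖a‖²)^{p−1}·a is strictly monotone. -/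
theorem keyeq (p d : ℝ) (hd : 0 < d) :
    (d^2/4) ^ (p-1) * d^2 / 2 = (2:ℝ)^(1-2*p) * d^(2*p) := by
  have hd2 : (0:ℝ) < d^2 := by positivity
  rw [Real.div_rpow (le_of_lt hd2) (by norm_num),
      show (4:ℝ) = (2:ℝ)^(2:ℝ) by rw [Real.rpow_two]; norm_num,
      ← Real.rpow_mul (by norm_num),
      show (d:ℝ)^2 = d^(2:ℝ) by rw [Real.rpow_two],
      ← Real.rpow_mul hd.le,
      div_mul_eq_mul_div, ← Real.rpow_add hd,
      div_div, div_eq_iff (by positivity),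
      ← Real.rpow_add_one (by norm_num : (2:ℝ) ≠ 0),
      mul_right_comm, ← Real.rpow_add (by norm_num : (0:ℝ) < 2),
      show (1-2*p) + (2*(p-1)+1) = 0 by ring, Real.rpow_zero, one_mul,
      show 2*(p-1)+2 = 2*p by ring]

theorem keyineq (p x y t d : ℝ) (hp : 1 ≤ p) (hy : 0 ≤ y) (hd : 0 < d)
    (h2 : d^2 = x^2 - 2*t + y^2) (h3 : d ≤ x + y) (hxy : y ≤ x) :
    (2:ℝ)^(1-2*p) * d^(2*p) ≤
      (1+x^2)^(p-1) * x^2 - ((1+x^2)^(p-1) + (1+y^2)^(p-1)) * t + (1+y^2)^(p-1) * y^2 := by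
  have hx : 0 ≤ x := le_trans hy hxy
  have hx2 : d^2/4 ≤ x^2 := by nlinarith
  have hC : (d^2/4)^(p-1) ≤ (1+x^2)^(p-1) :=
    Real.rpow_le_rpow (by positivity) (by linarith) (by linarith)
  have hB : (0:ℝ) < (1+y^2)^(p-1) := Real.rpow_pos_of_pos (by positivity) _
  have hAB : (1+y^2)^(p-1) ≤ (1+x^2)^(p-1) :=
    Real.rpow_le_rpow (by positivity) (by nlinarith) (by linarith)
  have ht : t = (x^2 + y^2 - d^2)/2 := by linarith
  subst ht
  rw [← keyeq p d hd]
  nlinarith [mul_nonneg (sub_nonneg.2 hAB) (by nlinarith : (0:ℝ) ≤ x^2 - y^2),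
    mul_nonneg (sub_nonneg.2 hC) (sq_nonneg d), mul_nonneg hB.le (sq_nonneg d)]

theorem mainineq (n : ℕ) (p : ℝ) (hp : 1 ≤ p) (a b : EuclideanSpace ℝ (Fin n)) :
    (2:ℝ)^(1-2*p) * ‖a - b‖ ^ (2 * p) ≤
      (inner ℝ ((1 + ‖a‖ ^ 2) ^ (p - 1) • a - (1 + ‖b‖ ^ 2) ^ (p - 1) • b) (a - b) : ℝ) := by
  have hip : (inner ℝ ((1 + ‖a‖ ^ 2) ^ (p - 1) • a - (1 + ‖b‖ ^ 2) ^ (p - 1) • b) (a - b) : ℝ)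
      = (1+‖a‖^2)^(p-1) * ‖a‖^2 - ((1+‖a‖^2)^(p-1) + (1+‖b‖^2)^(p-1)) * (inner ℝ a b : ℝ)
        + (1+‖b‖^2)^(p-1) * ‖b‖^2 := by
    simp only [inner_sub_left, inner_sub_right, real_inner_smul_left,
      real_inner_self_eq_norm_sq, real_inner_comm b a]
    ring
  rcases eq_or_ne a b with rfl | hab
  · have h0 : (0:ℝ)^(2*p) = 0 := Real.zero_rpow (by positivity)
    simp [h0]
  · have hd : 0 < ‖a - b‖ := by simpa [sub_eq_zero] using hab
    have h2 : ‖a - b‖^2 = ‖a‖^2 - 2*(inner ℝ a b : ℝ) + ‖b‖^2 := by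
      rw [@norm_sub_sq_real]
    have h3 : ‖a - b‖ ≤ ‖a‖ + ‖b‖ := norm_sub_le a b
    rw [hip]
    rcases le_total ‖b‖ ‖a‖ with hxy | hxy
    · exact keyineq p ‖a‖ ‖b‖ _ _ hp (norm_nonneg b) hd h2 h3 hxy
    · have := keyineq p ‖b‖ ‖a‖ (inner ℝ a b : ℝ) ‖a - b‖ hp (norm_nonneg a) hd
        (by linarith) (by linarith) hxy
      linarith

/-- For `n ≥ 1` and a real exponent `p ≥ 1`, there is `c > 0` such that for
all `a, b ∈ ℝⁿ`: `⟨(1 + ‖a‖²)^{p−1}a − (1 + ‖b‖²)^{p−1}b, a − b⟩ ≥ c‖a − b‖^{2p}`.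
In particular the map `a ↦ (1 + ‖a‖²)^{p−1}a` is strictly monotone. -/
theorem stmt10 (n : ℕ) (hn : 1 ≤ n) (p : ℝ) (hp : 1 ≤ p) :
    (∃ c : ℝ, 0 < c ∧ ∀ a b : EuclideanSpace ℝ (Fin n),
      c * ‖a - b‖ ^ (2 * p) ≤
        (inner ℝ ((1 + ‖a‖ ^ 2) ^ (p - 1) • a - (1 + ‖b‖ ^ 2) ^ (p - 1) • b) (a - b) : ℝ)) ∧
    ∀ a b : EuclideanSpace ℝ (Fin n), a ≠ b →
      (0 : ℝ) <
        inner ℝ ((1 + ‖a‖ ^ 2) ^ (p - 1) • a - (1 + ‖b‖ ^ 2) ^ (p - 1) • b) (a - b) := by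
  refine ⟨⟨(2:ℝ)^(1-2*p), Real.rpow_pos_of_pos (by norm_num) _,
    fun a b => mainineq n p hp a b⟩, fun a b hab => ?_⟩
  have hd : 0 < ‖a - b‖ := by simpa [sub_eq_zero] using hab
  have h1 := mainineq n p hp a b
  have h2 : 0 < (2:ℝ)^(1-2*p) * ‖a - b‖ ^ (2*p) :=
    mul_pos (Real.rpow_pos_of_pos (by norm_num) _) (Real.rpow_pos_of_pos hd _)
  linarith
end
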